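/- Let E be a real finite-dimensional normed vector space, let 0 < ν ≤ 1, let L ≥ 0, and let f : E → ℝ be differentiable, convex, and ν-approximable with parameter L, i.e. |f(y) − f(x) − ⟨f'(x), y − x⟩| ≤ (L/(1+ν))·‖y − x‖^{1+ν} for all x, y ∈ E. Then f has ν-Hölder continuous gradient with constant 2^{−ν}·((1+ν)/ν)^ν·L, i.e. ‖f'(x) − f'(y)‖* ≤ 2^{−ν}·((1+ν)/ν)^ν·L·‖x − y‖^ν for all x, y ∈ E. -/

import Mathlib

open Set

private lemma support_ineq {E : Type*} [NormedAddCommGroup E] [NormedSpace ℝ E]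
    (f : E → ℝ) (f' : E → (E →L[ℝ] ℝ))
    (hdiff : ∀ x, HasFDerivAt f (f' x) x)
    (hconv : ConvexOn ℝ Set.univ f) (a b : E) :
    f' a (b - a) ≤ f b - f a := by
  set g : ℝ → ℝ := fun t => f (a + t • (b - a)) with hg
  have hline : ∀ t : ℝ, HasDerivAt (fun s : ℝ => a + s • (b - a)) (b - a) t := by
    intro t
    simpa using ((hasDerivAt_id t).smul_const (b - a)).const_add a
  have hgd : HasDerivAt g (f' a (b - a)) 0 := by
    have := (hdiff (a + (0:ℝ) • (b - a))).comp_hasDerivAt 0 (hline 0)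
    simpa [g, Function.comp_def] using this
  have hgc : ConvexOn ℝ Set.univ g := by
    have h1 := hconv.comp_affineMap (AffineMap.lineMap a b)
    have h2 : g = f ∘ (AffineMap.lineMap a b) := by
      funext t
      simp only [Function.comp, AffineMap.lineMap_apply_module, g]
      congr 1
      module
    rw [h2]
    simpa using h1
  have h := hgc.le_slope_of_hasDerivAt (mem_univ (0:ℝ)) (mem_univ (1:ℝ)) one_pos hgd
  have hs : slope g 0 1 = f b - f a := by
    simp [slope_def_field, g]
  linarith [h.trans_eq hs]

/-- For a convex ν-approximable function with parameter L, the gradient is ν-Hölder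
continuous with constant `2^(-ν) * ((1+ν)/ν)^ν * L`. -/
theorem convex_approximable_implies_holder_gradient
    {E : Type*} [NormedAddCommGroup E] [NormedSpace ℝ E] [FiniteDimensional ℝ E]
    (ν L : ℝ) (hν0 : 0 < ν) (hν1 : ν ≤ 1) (hL : 0 ≤ L)
    (f : E → ℝ) (f' : E → (E →L[ℝ] ℝ))
    (hdiff : ∀ x, HasFDerivAt f (f' x) x)
    (hconv : ConvexOn ℝ Set.univ f)
    (happrox : ∀ x y : E, |f y - f x - f' x (y - x)| ≤ L / (1 + ν) * ‖y - x‖ ^ (1 + ν)) :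
    ∀ x y : E, ‖f' x - f' y‖ ≤ 2 ^ (-ν) * ((1 + ν) / ν) ^ ν * L * ‖x - y‖ ^ ν := by
  have hν1p : (0:ℝ) < 1 + ν := by linarith
  set C : ℝ := L / (1 + ν) with hC
  have hCnn : 0 ≤ C := div_nonneg hL hν1p.le
  -- key inequality
  have key : ∀ x y u : E, (f' x - f' y) u ≤ C * ‖(2⁻¹ : ℝ) • (x - y) + u‖ ^ (1 + ν) := by
    intro x y u
    set m : E := (2⁻¹ : ℝ) • (x + y)
    set v : E := (2⁻¹ : ℝ) • (x - y)
    have hzx : (m + u) - x = u - v := by simp only [m, v]; module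
    have hzy : (m + u) - y = v + u := by simp only [m, v]; module
    have hz'x : (m - u) - x = -(v + u) := by simp only [m, v]; module
    have hz'y : (m - u) - y = v - u := by simp only [m, v]; module
    have h1 : f' x (u - v) ≤ f (m + u) - f x := by
      have := support_ineq f f' hdiff hconv x (m + u); rwa [hzx] at this
    have h2 : f (m + u) ≤ f y + f' y (v + u) + C * ‖v + u‖ ^ (1 + ν) := by
      have := (abs_le.mp (happrox y (m + u))).2
      rw [hzy] at this; linarith
    have h3 : f' y (v - u) ≤ f (m - u) - f y := by
      have := support_ineq f f' hdiff hconv y (m - u); rwa [hz'y] at this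
    have h4 : f (m - u) ≤ f x + f' x (-(v + u)) + C * ‖v + u‖ ^ (1 + ν) := by
      have := (abs_le.mp (happrox x (m - u))).2
      rw [hz'x, norm_neg] at this; linarith
    have e1 : f' x (u - v) = f' x u - f' x v := map_sub _ _ _
    have e2 : f' y (v + u) = f' y v + f' y u := map_add _ _ _
    have e3 : f' y (v - u) = f' y v - f' y u := map_sub _ _ _
    have e4 : f' x (-(v + u)) = -(f' x v + f' x u) := by rw [map_neg, map_add]
    have e5 : (f' x - f' y) u = f' x u - f' y u := rfl
    rw [e5]; linarith
  intro x y
  rcases eq_or_ne x y with rfl | hxy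
  · simp [Real.zero_rpow hν0.ne']
  · set r : ℝ := ‖x - y‖ with hr
    have hrpos : 0 < r := by
      rw [hr, norm_pos_iff, sub_ne_zero]; exact hxy
    set a : ℝ := (1 + ν) / (2 * ν) with ha
    have hapos : 0 < a := by positivity
    set t : ℝ := r / (2 * ν) with ht
    have htpos : 0 < t := by positivity
    have hKnn : 0 ≤ L * a ^ ν * r ^ ν := by positivity
    -- pointwise bound
    have claim : ∀ h : E, (f' x - f' y) h ≤ L * a ^ ν * r ^ ν * ‖h‖ := by
      intro h
      rcases eq_or_ne h 0 with rfl | hh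
      · simp
      · have hhpos : 0 < ‖h‖ := norm_pos_iff.mpr hh
        set u : E := (t / ‖h‖) • h with hu
        have hun : ‖u‖ = t := by
          rw [hu, norm_smul, Real.norm_eq_abs, abs_of_pos (by positivity)]
          field_simp
        have happ : (f' x - f' y) u = (t / ‖h‖) * (f' x - f' y) h := by
          rw [hu, map_smul]; rfl
        have hnb : ‖(2⁻¹ : ℝ) • (x - y) + u‖ ≤ r / 2 + t := by
          calc ‖(2⁻¹ : ℝ) • (x - y) + u‖ ≤ ‖(2⁻¹ : ℝ) • (x - y)‖ + ‖u‖ := norm_add_le _ _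
            _ = r / 2 + t := by rw [hun, norm_smul]; simp [hr]; ring
        have hra : r / 2 + t = r * a := by
          rw [ht, ha]; field_simp; ring
        have hpow : ‖(2⁻¹ : ℝ) • (x - y) + u‖ ^ (1 + ν) ≤ (r * a) ^ (1 + ν) := by
          rw [← hra]
          exact Real.rpow_le_rpow (norm_nonneg _) hnb hν1p.le
        have hk := key x y u
        have hk2 : (t / ‖h‖) * (f' x - f' y) h ≤ C * (r * a) ^ (1 + ν) := by
          rw [← happ]
          exact hk.trans (mul_le_mul_of_nonneg_left hpow hCnn)
        -- expand (r*a)^(1+ν)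
        have hexp : (r * a) ^ (1 + ν) = r * a * (r ^ ν * a ^ ν) := by
          rw [Real.mul_rpow hrpos.le hapos.le,
            Real.rpow_add hrpos, Real.rpow_add hapos, Real.rpow_one, Real.rpow_one]
          ring
        have halg : C * (r * a) ^ (1 + ν) = L * a ^ ν * r ^ ν * t := by
          rw [hexp, hC, ht, ha]
          field_simp
        rw [halg] at hk2
        have h1 : (f' x - f' y) h = (‖h‖ / t) * (t / ‖h‖ * (f' x - f' y) h) := by
          field_simp
        rw [h1]
        calc (‖h‖ / t) * (t / ‖h‖ * (f' x - f' y) h)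
            ≤ (‖h‖ / t) * (L * a ^ ν * r ^ ν * t) :=
              mul_le_mul_of_nonneg_left hk2 (by positivity)
          _ = L * a ^ ν * r ^ ν * ‖h‖ := by field_simp
    -- constant identity
    have hconst : L * a ^ ν = 2 ^ (-ν) * ((1 + ν) / ν) ^ ν * L := by
      have h2 : a = ((1 + ν) / ν) / 2 := by rw [ha]; ring
      rw [h2, Real.div_rpow (by positivity) (by norm_num), Real.rpow_neg (by norm_num)]
      ring
    have : ‖f' x - f' y‖ ≤ L * a ^ ν * r ^ ν := by
      apply ContinuousLinearMap.opNorm_le_bound _ hKnn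
      intro h
      rw [Real.norm_eq_abs, abs_le']
      constructor
      · exact claim h
      · have := claim (-h)
        rw [map_neg, norm_neg] at this
        linarith
    calc ‖f' x - f' y‖ ≤ L * a ^ ν * r ^ ν := this
      _ = 2 ^ (-ν) * ((1 + ν) / ν) ^ ν * L * ‖x - y‖ ^ ν := by rw [hconst, hr]
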